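/- Fix N ≥ 1, arrival angles θ_1,…,θ_N ∈ ℝ with sin(π(sin θ_n − sin θ_i)/2) ≠ 0 for all pairs n ≠ i, Ricean K-factors K_1,…,K_N ≥ 0, β_n > 0, E_u > 0 and an index n. For M > N, with Ω = diag(K_1,…,K_N) and H̄_M the M×N steering matrix, define Σ̂_M = (Ω+I_N)^{-1} + (1/M)·[Ω(Ω+I_N)^{-1}]^{1/2}·H̄_M^H H̄_M·[Ω(Ω+I_N)^{-1}]^{1/2}. Then Σ̂_M converges entrywise to I_N, Σ̂_M is invertible for all sufficiently large M, and log₂( 1 + (E_u/M)·β_n·(M−N) / [Σ̂_M^{-1}]_{nn} ) → log₂(1 + E_u·β_n) as M → ∞. -/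

import Mathlib

open Filter Matrix

/-- The `M×N` steering matrix with entries `[H̄]_{mn} = exp(−i(m−1)π sin θ_n)`, `m = 1,…,M`. -/
noncomputable def steer {N : ℕ} (θ : Fin N → ℝ) (M : ℕ) : Matrix (Fin M) (Fin N) ℂ :=
  fun m n => Complex.exp (-Complex.I * ((m : ℕ) : ℂ) * (Real.pi : ℂ) * (Real.sin (θ n) : ℂ))

/-- The diagonal matrix `[Ω(Ω+I_N)^{-1}]^{1/2}` with entries `√(K_i/(K_i+1))`. -/
noncomputable def sqrtRicean {N : ℕ} (K : Fin N → ℝ) : Matrix (Fin N) (Fin N) ℂ :=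
  Matrix.diagonal fun i => (Real.sqrt (K i / (K i + 1)) : ℂ)

/-- The matrix `Σ̂_M = (Ω+I_N)^{-1} + (1/M)·[Ω(Ω+I_N)^{-1}]^{1/2} H̄_M^H H̄_M [Ω(Ω+I_N)^{-1}]^{1/2}`. -/
noncomputable def sigmaHat {N : ℕ} (θ K : Fin N → ℝ) (M : ℕ) : Matrix (Fin N) (Fin N) ℂ :=
  Matrix.diagonal (fun i => ((1 / (K i + 1) : ℝ) : ℂ)) +
    ((M : ℂ))⁻¹ • (sqrtRicean K * ((steer θ M)ᴴ * steer θ M) * sqrtRicean K)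

lemma steer_entry {N : ℕ} (θ : Fin N → ℝ) (M : ℕ) (i j : Fin N) :
    ((steer θ M)ᴴ * steer θ M) i j
      = ∑ m ∈ Finset.range M,
          Complex.exp (((Real.pi * (Real.sin (θ i) - Real.sin (θ j)) : ℝ) : ℂ) * Complex.I) ^ m := by
  rw [Matrix.mul_apply, ← Fin.sum_univ_eq_sum_range]
  refine Finset.sum_congr rfl fun m _ => ?_
  simp only [Matrix.conjTranspose_apply, steer]
  rw [Complex.star_def, ← Complex.exp_conj, ← Complex.exp_add, ← Complex.exp_nat_mul]
  congr 1
  simp only [_root_.map_mul, _root_.map_neg, Complex.conj_I, Complex.conj_ofReal,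
    Complex.conj_natCast]
  push_cast
  ring

lemma steer_entry_diag {N : ℕ} (θ : Fin N → ℝ) (M : ℕ) (i : Fin N) :
    ((steer θ M)ᴴ * steer θ M) i i = (M : ℂ) := by
  rw [steer_entry]; simp

lemma r_ne_one {d : ℝ} (hd : Real.sin (Real.pi * d / 2) ≠ 0) :
    Complex.exp (((Real.pi * d : ℝ) : ℂ) * Complex.I) ≠ 1 := by
  intro h
  rw [Complex.exp_eq_one_iff] at h
  obtain ⟨k, hk⟩ := h
  have h2 : ((Real.pi * d : ℝ) : ℂ) = (((k : ℝ) * (2 * Real.pi) : ℝ) : ℂ) := by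
    apply mul_right_cancel₀ Complex.I_ne_zero
    rw [hk]; push_cast; ring
  have h3 : Real.pi * d = (k : ℝ) * (2 * Real.pi) := by exact_mod_cast h2
  have h4 : Real.pi * d / 2 = (k : ℝ) * Real.pi := by
    field_simp at h3 ⊢; linarith
  exact hd (h4 ▸ Real.sin_int_mul_pi k)

lemma geom_bound {r : ℂ} (hr : r ≠ 1) (hab : ‖r‖ = 1) (M : ℕ) :
    ‖∑ m ∈ Finset.range M, r ^ m‖ ≤ 2 / ‖r - 1‖ := by
  rw [geom_sum_eq hr, norm_div]
  have hc : 0 < ‖r - 1‖ := by rw [norm_pos_iff, sub_ne_zero]; exact hr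
  have h2 : ‖r ^ M - 1‖ ≤ 2 := by
    calc ‖r ^ M - 1‖ ≤ ‖r ^ M‖ + ‖(1 : ℂ)‖ := norm_sub_le _ _
    _ = 2 := by rw [norm_pow, hab]; norm_num
  gcongr

/-- (Corollary 4 of the paper.) `Σ̂_M → I_N` entrywise, `Σ̂_M` is
invertible for all large `M`, and with `p_u = E_u/M` the closed-form ZF rate approximation
`log₂(1 + (E_u/M) β_n (M−N)/[Σ̂_M^{-1}]_{nn})` converges to `log₂(1 + E_u β_n)`. -/
theorem zf_rate_approx_power_scaling
    (N : ℕ) (hN : 1 ≤ N) (θ : Fin N → ℝ)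
    (hθ : ∀ n i : Fin N, n ≠ i →
      Real.sin (Real.pi * (Real.sin (θ n) - Real.sin (θ i)) / 2) ≠ 0)
    (K : Fin N → ℝ) (hK : ∀ i, 0 ≤ K i)
    (β : Fin N → ℝ) (hβ : ∀ i, 0 < β i) (n : Fin N) (Eu : ℝ) (hEu : 0 < Eu) :
    (∀ i j : Fin N,
      Filter.Tendsto (fun M : ℕ => sigmaHat θ K M i j) Filter.atTop
        (nhds ((1 : Matrix (Fin N) (Fin N) ℂ) i j))) ∧
    (∀ᶠ M : ℕ in Filter.atTop, IsUnit (sigmaHat θ K M)) ∧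
    Filter.Tendsto (fun M : ℕ =>
        Real.logb 2 (1 + (Eu / M) * β n * ((M : ℝ) - N) / (((sigmaHat θ K M)⁻¹) n n).re))
      Filter.atTop (nhds (Real.logb 2 (1 + Eu * β n))) := by
  have h1 : ∀ i j : Fin N,
      Filter.Tendsto (fun M : ℕ => sigmaHat θ K M i j) Filter.atTop
        (nhds ((1 : Matrix (Fin N) (Fin N) ℂ) i j)) := by
    intro i j
    by_cases hij : i = j
    · subst hij
      rw [Matrix.one_apply_eq]
      apply Tendsto.congr' _ (tendsto_const_nhds (x := (1 : ℂ)))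
      filter_upwards [eventually_ge_atTop 1] with M hM
      have hM0 : (M : ℂ) ≠ 0 := Nat.cast_ne_zero.2 (by omega)
      have hKi : (K i + 1 : ℝ) ≠ 0 := by have := hK i; positivity
      simp only [sigmaHat, Matrix.add_apply, Matrix.smul_apply, smul_eq_mul, sqrtRicean,
        Matrix.mul_diagonal, Matrix.diagonal_mul, Matrix.diagonal_apply_eq, steer_entry_diag]
      set s : ℂ := ((Real.sqrt (K i / (K i + 1)) : ℝ) : ℂ)
      have hs : s * s = ((K i / (K i + 1) : ℝ) : ℂ) := by
        rw [← Complex.ofReal_mul, Real.mul_self_sqrt (by have := hK i; positivity)]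
      rw [show (M : ℂ)⁻¹ * (s * (M : ℂ) * s) = s * s * ((M : ℂ)⁻¹ * (M : ℂ)) by ring,
        inv_mul_cancel₀ hM0, mul_one, hs, ← Complex.ofReal_add, ← Complex.ofReal_one]
      congr 1
      field_simp
      ring
    · rw [Matrix.one_apply_ne hij]
      set r : ℂ :=
        Complex.exp (((Real.pi * (Real.sin (θ i) - Real.sin (θ j)) : ℝ) : ℂ) * Complex.I) with hrdef
      have hr : r ≠ 1 := r_ne_one (hθ i j hij)
      have hab : ‖r‖ = 1 := Complex.norm_exp_ofReal_mul_I _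
      set C : ℝ := 2 / ‖r - 1‖ with hC
      refine squeeze_zero_norm (fun M : ℕ => ?_) (tendsto_const_div_atTop_nhds_zero_nat C)
      have hsb : ∀ l : Fin N, ‖((Real.sqrt (K l / (K l + 1)) : ℝ) : ℂ)‖ ≤ 1 := by
        intro l
        rw [Complex.norm_real, Real.norm_eq_abs, abs_of_nonneg (Real.sqrt_nonneg _)]
        rw [Real.sqrt_le_one]
        rw [div_le_one (by have := hK l; positivity)]
        linarith
      have hCnn : 0 ≤ C := by
        apply div_nonneg (by norm_num) (norm_nonneg _)
      have hentry : sigmaHat θ K M i j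
          = (M : ℂ)⁻¹ * (((Real.sqrt (K i / (K i + 1)) : ℝ) : ℂ) *
              ((steer θ M)ᴴ * steer θ M) i j * ((Real.sqrt (K j / (K j + 1)) : ℝ) : ℂ)) := by
        simp [sigmaHat, Matrix.add_apply, Matrix.smul_apply, smul_eq_mul, sqrtRicean,
          Matrix.mul_diagonal, Matrix.diagonal_mul, Matrix.diagonal_apply_ne _ hij]
      have hG : ‖((steer θ M)ᴴ * steer θ M) i j‖ ≤ C := by
        rw [steer_entry, ← hrdef]; exact geom_bound hr hab M
      calc ‖sigmaHat θ K M i j‖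
          = (M : ℝ)⁻¹ * (‖((Real.sqrt (K i / (K i + 1)) : ℝ) : ℂ)‖ *
              ‖((steer θ M)ᴴ * steer θ M) i j‖ * ‖((Real.sqrt (K j / (K j + 1)) : ℝ) : ℂ)‖) := by
            rw [hentry, norm_mul, norm_mul, norm_mul, norm_inv, Complex.norm_natCast]
        _ ≤ (M : ℝ)⁻¹ * (1 * C * 1) := by
            gcongr
            · exact hsb i
            · exact hsb j
        _ = C / M := by ring
  have hmat : Filter.Tendsto (fun M : ℕ => sigmaHat θ K M) Filter.atTop
      (nhds (1 : Matrix (Fin N) (Fin N) ℂ)) := by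
    apply tendsto_pi_nhds.2
    intro i
    apply tendsto_pi_nhds.2
    intro j
    exact h1 i j
  have hdet : Filter.Tendsto (fun M : ℕ => (sigmaHat θ K M).det) Filter.atTop (nhds 1) := by
    have := ((continuous_id.matrix_det).tendsto (1 : Matrix (Fin N) (Fin N) ℂ)).comp hmat
    simpa [Matrix.det_one, Function.comp_def] using this
  have h2 : ∀ᶠ M : ℕ in Filter.atTop, IsUnit (sigmaHat θ K M) := by
    filter_upwards [hdet.eventually_ne one_ne_zero] with M hM
    exact (Matrix.isUnit_iff_isUnit_det _).2 (isUnit_iff_ne_zero.2 hM)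
  refine ⟨h1, h2, ?_⟩
  have hadjmat := ((continuous_id.matrix_adjugate).tendsto (1 : Matrix (Fin N) (Fin N) ℂ)).comp hmat
  have hadj : Filter.Tendsto (fun M : ℕ => (sigmaHat θ K M).adjugate n n) Filter.atTop
      (nhds 1) := by
    have := tendsto_pi_nhds.1 (tendsto_pi_nhds.1 hadjmat n) n
    simpa [Matrix.adjugate_one, Matrix.one_apply_eq] using this
  have hinv : Filter.Tendsto (fun M : ℕ => ((sigmaHat θ K M)⁻¹) n n) Filter.atTop (nhds 1) := by
    have h := (hdet.inv₀ one_ne_zero).mul hadj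
    simp only [inv_one, one_mul] at h
    apply h.congr
    intro M
    rw [Matrix.inv_def, Matrix.smul_apply, smul_eq_mul, Ring.inverse_eq_inv]
  have hre : Filter.Tendsto (fun M : ℕ => (((sigmaHat θ K M)⁻¹) n n).re) Filter.atTop (nhds 1) := by
    have := (Complex.continuous_re.tendsto 1).comp hinv
    simpa [Function.comp_def] using this
  have hnum : Filter.Tendsto (fun M : ℕ => (Eu / M) * β n * ((M : ℝ) - N)) Filter.atTop
      (nhds (Eu * β n)) := by
    have hbase : Filter.Tendsto (fun M : ℕ => Eu * β n * (1 - (N : ℝ) / M)) Filter.atTop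
        (nhds (Eu * β n * (1 - 0))) :=
      tendsto_const_nhds.mul (tendsto_const_nhds.sub (tendsto_const_div_atTop_nhds_zero_nat _))
    rw [sub_zero, mul_one] at hbase
    apply hbase.congr'
    filter_upwards [eventually_ge_atTop 1] with M hM
    have hM0 : (M : ℝ) ≠ 0 := Nat.cast_ne_zero.2 (by omega)
    field_simp
  have hfrac := hnum.div hre one_ne_zero
  rw [div_one] at hfrac
  have hpos : (0 : ℝ) < 1 + Eu * β n := by
    have := mul_pos hEu (hβ n); linarith
  have hlog := (Real.continuousAt_logb (b := 2) (ne_of_gt hpos)).tendsto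
  have := hlog.comp (tendsto_const_nhds.add hfrac)
  simpa [Function.comp_def] using this
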